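/- Let K be an integral domain whose group of units K× is finite of order m, and let (K, K×) be the representation in which K× acts on the K-module K by multiplication. Then an element u ∈ KF is an identity of the representation (K, K×) if and only if u is an identity of every representation (V,G) over K in which the action operators commute and every operator has order dividing m, i.e., (v∘g)∘h = (v∘h)∘g and v∘gᵐ = v for all v ∈ V and g, h ∈ G. (The variety ω𝔄_m is generated by (K, K×).) -/

import Mathlib

set_option linter.dupNamespace false

open MonoidAlgebra Multiplicative Polynomial

namespace OmegaAmAux

/-- The character on exponent vectors determined by values `a i` of exponent dividing `m`. -/
def Phi (m : ℕ) [NeZero m] {C : Type*} [CommMonoid C] (a : ℕ → C) (ha : ∀ i, a i ^ m = 1) :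
    Multiplicative (ℕ →₀ ZMod m) →* C where
  toFun x := (toAdd x).prod fun i e => a i ^ e.val
  map_one' := by simp
  map_mul' x y := by
    show (toAdd x + toAdd y).prod (fun i e => a i ^ e.val)
      = (toAdd x).prod (fun i e => a i ^ e.val) * (toAdd y).prod (fun i e => a i ^ e.val)
    exact Finsupp.prod_add_index (fun i _ => by simp) (fun i _ e e' => by
      rw [ZMod.val_add, ← pow_eq_pow_mod _ (ha i), pow_add])

lemma Phi_ofAdd_single (m : ℕ) [NeZero m] {C : Type*} [CommMonoid C] (a : ℕ → C)
    (ha : ∀ i, a i ^ m = 1) (i : ℕ) (e : ZMod m) :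
    Phi m a ha (ofAdd (Finsupp.single i e)) = a i ^ e.val := by
  show (Finsupp.single i e).prod (fun i e => a i ^ e.val) = a i ^ e.val
  exact Finsupp.prod_single_index (by simp)

lemma Phi_gen (m : ℕ) [NeZero m] {C : Type*} [CommMonoid C] (a : ℕ → C)
    (ha : ∀ i, a i ^ m = 1) (i : ℕ) :
    Phi m a ha (ofAdd (Finsupp.single i 1)) = a i := by
  rw [Phi_ofAdd_single]
  have h1 : (1 : ZMod m).val = 1 % m := by
    rw [← Nat.cast_one, ZMod.val_natCast]
  rw [h1, ← pow_eq_pow_mod _ (ha i), pow_one]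

/-- abelianization mod m of the free group -/
noncomputable def psi (m : ℕ) : FreeGroup ℕ →* Multiplicative (ℕ →₀ ZMod m) :=
  FreeGroup.lift fun i => ofAdd (Finsupp.single i 1)

lemma psi_of (m : ℕ) (i : ℕ) : psi m (FreeGroup.of i) = ofAdd (Finsupp.single i 1) :=
  FreeGroup.lift_apply_of


lemma core (K : Type) [CommRing K] [IsDomain K] [Finite Kˣ] (m : ℕ) (hm : Nat.card Kˣ = m)
    [NeZero m] :
    ∀ (n : ℕ) (c : (Fin n → ZMod m) → K),
      (∀ t : Fin n → Kˣ,
        ∑ f : Fin n → ZMod m, c f * ∏ i, ((t i : K) ^ (f i).val) = 0) →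
      ∀ f, c f = 0 := by
  intro n
  induction n with
  | zero =>
    intro c h f
    have h0 := h Fin.elim0
    rw [Fintype.sum_subsingleton _ f] at h0
    simpa using h0
  | succ n IH =>
    intro c h f
    -- reduce to applying IH to each slice
    suffices hs : ∀ (j : ZMod m) (f' : Fin n → ZMod m), c (Fin.cons j f') = 0 by
      have := hs (f 0) (Fin.tail f)
      rwa [Fin.cons_self_tail f] at this
    intro j f'
    refine IH (fun f' => c (Fin.cons j f')) ?_ f'
    intro t'
    -- the polynomial in the 0-th variable
    set B : ZMod m → K := fun j =>
      ∑ f' : Fin n → ZMod m, c (Fin.cons j f') * ∏ i, ((t' i : K) ^ (f' i).val) with hB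
    set p : K[X] := ∑ j : ZMod m, C (B j) * X ^ (j.val) with hp
    have heval : ∀ ζ : Kˣ, p.eval (ζ : K) = 0 := by
      intro ζ
      have h0 := h (Fin.cons ζ t')
      rw [← Fintype.sum_equiv (Fin.consEquiv fun _ => ZMod m)
        (fun q => c (Fin.cons q.1 q.2) *
          ((ζ : K) ^ (q.1).val * ∏ i, ((t' i : K) ^ (q.2 i).val)))
        (fun f => c f * ∏ i, (((Fin.cons ζ t' : Fin (n+1) → Kˣ) i : K) ^ (f i).val))
        ?_ ] at h0
      · rw [Fintype.sum_prod_type] at h0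
        rw [hp]
        rw [eval_finset_sum]
        rw [← h0]
        refine Finset.sum_congr rfl fun j _ => ?_
        rw [eval_mul, eval_C, eval_pow, eval_X, hB, Finset.sum_mul]
        refine Finset.sum_congr rfl fun g _ => ?_
        ring
      · rintro ⟨j', g⟩
        show c (Fin.cons j' g) * _ = c (Fin.cons j' g) * _
        congr 1
        rw [Fin.prod_univ_succ]
        simp only [Fin.consEquiv_apply, Fin.cons_zero, Fin.cons_succ]
    have hp0 : p = 0 := by
      haveI : Fintype Kˣ := Fintype.ofFinite Kˣ
      refine eq_zero_of_natDegree_lt_card_of_eval_eq_zero p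
        (f := fun ζ : Kˣ => (ζ : K)) (fun a b hab => Units.ext hab) heval ?_
      rw [← Nat.card_eq_fintype_card, hm]
      have hd : p.natDegree ≤ m - 1 := by
        refine natDegree_sum_le_of_forall_le _ _ fun j _ => ?_
        refine le_trans (natDegree_C_mul_le _ _) ?_
        rw [natDegree_X_pow]
        exact Nat.le_pred_of_lt (ZMod.val_lt j)
      exact lt_of_le_of_lt hd (Nat.pred_lt (NeZero.ne m))
    have hcoeff : B j = 0 := by
      have : p.coeff j.val = B j := by
        rw [hp, finset_sum_coeff]
        rw [Finset.sum_eq_single j]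
        · simp
        · intro j' _ hj'
          rw [coeff_C_mul, coeff_X_pow, if_neg, mul_zero]
          exact fun hv => hj' (ZMod.val_injective m hv.symm)
        · simp
      rw [← this, hp0, Polynomial.coeff_zero]
    rw [← hcoeff, hB]


lemma finsupp_core (K : Type) [CommRing K] [IsDomain K] [Finite Kˣ] (m : ℕ)
    (hm : Nat.card Kˣ = m) [NeZero m]
    (w : Multiplicative (ℕ →₀ ZMod m) →₀ K)
    (h : ∀ (t : ℕ → Kˣ) (ht : ∀ i, t i ^ m = 1),
      (w.sum fun x c => c * ((Phi m t ht x : Kˣ) : K)) = 0) :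
    w = 0 := by
  classical
  set n : ℕ := w.support.sup (fun x => (toAdd x).support.sup fun i => i + 1) with hn
  have hbound : ∀ x ∈ w.support, ∀ i ∈ (toAdd x).support, i < n := by
    intro x hx i hi
    have h1 : i + 1 ≤ (toAdd x).support.sup (fun i => i + 1) :=
      Finset.le_sup (f := fun i => i + 1) hi
    have h2 : (toAdd x).support.sup (fun i => i + 1) ≤ n :=
      Finset.le_sup (f := fun x => (toAdd x).support.sup fun i => i + 1) hx
    omega
  set ι : (Fin n → ZMod m) → Multiplicative (ℕ →₀ ZMod m) :=
    fun g => ofAdd (∑ i : Fin n, Finsupp.single (i : ℕ) (g i)) with hι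
  have hread : ∀ (g : Fin n → ZMod m) (i : Fin n), toAdd (ι g) (i : ℕ) = g i := by
    intro g i
    rw [hι]
    show (∑ i' : Fin n, Finsupp.single (i' : ℕ) (g i')) (i : ℕ) = g i
    rw [Finsupp.finset_sum_apply]
    rw [Finset.sum_eq_single i]
    · rw [Finsupp.single_apply, if_pos rfl]
    · intro i' _ hne
      rw [Finsupp.single_apply, if_neg (fun hc => hne (Fin.val_injective hc))]
    · simp
  have hinj : Function.Injective ι := by
    intro g g' hgg
    funext i
    rw [← hread g i, hgg, hread]
  have hmem : ∀ x ∈ w.support, ∃ g : Fin n → ZMod m, ι g = x := by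
    intro x hx
    refine ⟨fun i => toAdd x (i : ℕ), ?_⟩
    have : (∑ i : Fin n, Finsupp.single (i : ℕ) (toAdd x (i : ℕ))) = toAdd x := by
      ext k
      by_cases hk : k < n
      · have := hread (fun i => toAdd x (i : ℕ)) ⟨k, hk⟩
        simpa [hι] using this
      · rw [Finsupp.finset_sum_apply, Finset.sum_eq_zero]
        · by_contra hc
          exact hk (hbound x hx k (Finsupp.mem_support_iff.mpr fun h0 => hc h0.symm))
        · intro i _
          rw [Finsupp.single_apply, if_neg]
          omega
    rw [hι]
    show ofAdd _ = x
    rw [this]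
    rfl
  have hc0 : ∀ g : Fin n → ZMod m, w (ι g) = 0 := by
    refine core K m hm n (fun g => w (ι g)) ?_
    intro t'
    set t : ℕ → Kˣ := fun k => if hk : k < n then t' ⟨k, hk⟩ else 1 with ht'
    have ht : ∀ i, t i ^ m = 1 := fun i => by rw [← hm]; exact pow_card_eq_one'
    have h0 := h t ht
    rw [Finsupp.sum] at h0
    have himg : w.support ⊆ Finset.univ.image ι := by
      intro x hx
      obtain ⟨g, hg⟩ := hmem x hx
      exact Finset.mem_image.mpr ⟨g, Finset.mem_univ _, hg⟩
    rw [Finset.sum_subset himg (fun x _ hx => by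
      rw [Finsupp.notMem_support_iff.mp hx, zero_mul]),
      Finset.sum_image (fun a _ b _ hab => hinj hab)] at h0
    rw [← h0]
    refine Finset.sum_congr rfl fun g _ => ?_
    congr 1
    -- Phi value at ι g
    have : Phi m t ht (ι g) = ∏ i : Fin n, t' i ^ (g i).val := by
      rw [hι]
      show Phi m t ht (ofAdd (∑ i : Fin n, Finsupp.single (i : ℕ) (g i))) = _
      rw [ofAdd_sum, map_prod]
      refine Finset.prod_congr rfl fun i _ => ?_
      rw [Phi_ofAdd_single]
      congr 1
      rw [ht']
      simp [i.isLt]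
    rw [this]
    push_cast
    rfl
  ext x
  rw [Finsupp.coe_zero, Pi.zero_apply]
  by_cases hx : x ∈ w.support
  · obtain ⟨g, hg⟩ := hmem x hx
    rw [← hg]
    exact hc0 g
  · exact Finsupp.notMem_support_iff.mp hx

end OmegaAmAux
open OmegaAmAux in
/-- over an integral domain `K` whose unit group `K×` is finite of order `m`,
an element `u ∈ KF` is an identity of the representation `(K, K×)` (units acting on `K` by
multiplication) iff `u` is an identity of every representation `(V, G)` whose action
operators pairwise commute and in which every operator has order dividing `m`;
i.e. the variety `ω𝔄_m` is generated by `(K, K×)`. -/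
theorem omegaAm_generated_by_units_representation
    (K : Type) [CommRing K] [IsDomain K] [Finite Kˣ] (m : ℕ) (hm : Nat.card Kˣ = m)
    (u : MonoidAlgebra K (FreeGroup ℕ)) :
    (∀ β : FreeGroup ℕ →* Kˣ, ∀ v : K,
        (MonoidAlgebra.lift K K (FreeGroup ℕ) ((Units.coeHom K).comp β)) u * v = 0) ↔
    (∀ (G : Type) [Group G] (V : Type) [AddCommGroup V] [Module (MonoidAlgebra K G) V],
        (∀ (g h : G) (v : V),
            MonoidAlgebra.of K G g • (MonoidAlgebra.of K G h • v) =
              MonoidAlgebra.of K G h • (MonoidAlgebra.of K G g • v)) →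
        (∀ (g : G) (v : V), MonoidAlgebra.of K G (g ^ m) • v = v) →
        ∀ β : FreeGroup ℕ →* G, ∀ v : V, (MonoidAlgebra.mapDomainAlgHom K K β u) • v = 0) := by
  haveI : NeZero m := ⟨by rw [← hm]; exact Nat.card_pos.ne'⟩
  constructor
  · -- hard direction
    intro hL G _ V _ _ hcomm hpow β v
    -- the monoid hom sending a group element to its action operator
    let T : G →* Function.End V :=
      { toFun := fun g w => MonoidAlgebra.of K G g • w
        map_one' := funext fun w => by
          show MonoidAlgebra.of K G 1 • w = w
          rw [map_one, one_smul]
        map_mul' := fun g h => funext fun w => by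
          show MonoidAlgebra.of K G (g * h) • w
            = MonoidAlgebra.of K G g • (MonoidAlgebra.of K G h • w)
          rw [map_mul, mul_smul] }
    let T1 : G →* (Function.End V)ˣ := T.toHomUnits
    letI instCG : CommGroup ↥(MonoidHom.range T1) :=
      { (inferInstance : Group ↥(MonoidHom.range T1)) with
        mul_comm := by
          rintro ⟨x, g, rfl⟩ ⟨y, h, rfl⟩
          refine Subtype.ext (Units.ext ?_)
          show ((T1 g * T1 h : (Function.End V)ˣ) : Function.End V)
            = ((T1 h * T1 g : (Function.End V)ˣ) : Function.End V)
          rw [Units.val_mul, Units.val_mul, MonoidHom.coe_toHomUnits,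
            MonoidHom.coe_toHomUnits]
          funext w
          exact hcomm g h w }
    have Spow : ∀ x : ↥(MonoidHom.range T1), x ^ m = 1 := by
      rintro ⟨x, g, rfl⟩
      refine Subtype.ext (Units.ext ?_)
      show (((T1 g : (Function.End V)ˣ) ^ m : (Function.End V)ˣ) : Function.End V) = _
      rw [Units.val_pow_eq_pow_val, MonoidHom.coe_toHomUnits, ← map_pow]
      funext w
      exact hpow g w
    let a : ℕ → ↥(MonoidHom.range T1) := fun i => T1.rangeRestrict (β (FreeGroup.of i))
    have ha : ∀ i, a i ^ m = 1 := fun i => Spow _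
    have key : ∀ w : FreeGroup ℕ,
        T (β w) = (((Phi m a ha (psi m w) : ↥(MonoidHom.range T1)) :
          (Function.End V)ˣ) : Function.End V) := by
      have heq : T1.rangeRestrict.comp β = (Phi m a ha).comp (psi m) :=
        FreeGroup.ext_hom _ _ fun i => by
          show T1.rangeRestrict (β (FreeGroup.of i)) = Phi m a ha (psi m (FreeGroup.of i))
          rw [psi_of, Phi_gen]
      intro w
      have h1 := congrArg (fun z : ↥(MonoidHom.range T1) => ((z : (Function.End V)ˣ) :
        Function.End V)) (DFunLike.congr_fun heq w)
      simp only [MonoidHom.comp_apply] at h1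
      rw [MonoidHom.coe_rangeRestrict, MonoidHom.coe_toHomUnits] at h1
      exact h1
    -- the K-side hypothesis in terms of the abelianized element
    have hwbar : ∀ (t : ℕ → Kˣ) (ht : ∀ i, t i ^ m = 1),
        ((Finsupp.mapDomain (psi m) u.coeff).sum fun x c => c * ((Phi m t ht x : Kˣ) : K)) = 0 := by
      intro t ht
      have hPsi : (Phi m t ht).comp (psi m) = FreeGroup.lift t :=
        FreeGroup.ext_hom _ _ fun i => by
          rw [MonoidHom.comp_apply, psi_of, Phi_gen, FreeGroup.lift_apply_of]
      have h0 := hL (FreeGroup.lift t) 1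
      rw [mul_one, MonoidAlgebra.lift_apply] at h0
      have hmd : ((Finsupp.mapDomain (psi m) u.coeff).sum fun x c => c * ((Phi m t ht x : Kˣ) : K))
          = u.coeff.sum fun w c => c * ((Phi m t ht (psi m w) : Kˣ) : K) :=
        Finsupp.sum_mapDomain_index (fun x => zero_mul _) (fun x c c' => add_mul _ _ _)
      rw [hmd, ← h0]
      refine Finsupp.sum_congr fun w _ => ?_
      have hw := DFunLike.congr_fun hPsi w
      rw [MonoidHom.comp_apply] at hw
      rw [smul_eq_mul, hw]
      rfl
    have hw0 : Finsupp.mapDomain (psi m) u.coeff = 0 := finsupp_core K m hm _ hwbar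
    -- computing the action of an element of the monoid algebra
    have hsm : ∀ x : MonoidAlgebra K G,
        x • v = x.coeff.sum fun g c => MonoidAlgebra.single (1 : G) c • (T g v) := by
      intro x
      conv_lhs => rw [← MonoidAlgebra.sum_coeff_single x]
      rw [Finsupp.sum, Finsupp.sum, Finset.sum_smul]
      refine Finset.sum_congr rfl fun g _ => ?_
      have h1 : (MonoidAlgebra.single g (x.coeff g) : MonoidAlgebra K G)
          = MonoidAlgebra.single (1 : G) (x.coeff g) * MonoidAlgebra.single g 1 := by
        rw [MonoidAlgebra.single_mul_single, one_mul, mul_one]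
      rw [h1, mul_smul]
      rfl
    have hmap : (MonoidAlgebra.mapDomainAlgHom K K β) u = MonoidAlgebra.mapDomain β u := rfl
    rw [hmap, hsm]
    have hmd1 : ((MonoidAlgebra.mapDomain β u).coeff.sum fun g c => MonoidAlgebra.single (1 : G) c • (T g v))
        = u.coeff.sum fun w c => MonoidAlgebra.single (1 : G) c • (T (β w) v) :=
      Finsupp.sum_mapDomain_index
        (fun g => by rw [MonoidAlgebra.single_zero, zero_smul])
        (fun g c c' => by rw [MonoidAlgebra.single_add, add_smul])
    rw [hmd1]
    have step1 : (u.coeff.sum fun w c => MonoidAlgebra.single (1 : G) c • (T (β w) v))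
        = u.coeff.sum fun w c =>
            MonoidAlgebra.single (1 : G) c • ((((Phi m a ha (psi m w) : ↥(MonoidHom.range T1)) : (Function.End V)ˣ) : Function.End V) v) :=
      Finsupp.sum_congr fun w _ => by rw [key w]
    have hmd2 : ((Finsupp.mapDomain (psi m) u.coeff).sum fun x c =>
          MonoidAlgebra.single (1 : G) c • ((((Phi m a ha x : ↥(MonoidHom.range T1)) : (Function.End V)ˣ) : Function.End V) v))
        = u.coeff.sum fun w c =>
            MonoidAlgebra.single (1 : G) c • ((((Phi m a ha (psi m w) : ↥(MonoidHom.range T1)) : (Function.End V)ˣ) : Function.End V) v) :=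
      Finsupp.sum_mapDomain_index
        (fun x => by rw [MonoidAlgebra.single_zero, zero_smul])
        (fun x c c' => by rw [MonoidAlgebra.single_add, add_smul])
    rw [step1, ← hmd2, hw0, Finsupp.sum_zero_index]
  · -- easy direction
    intro hR β v
    letI instM : Module (MonoidAlgebra K Kˣ) K :=
      Module.compHom K (MonoidAlgebra.lift K K Kˣ (Units.coeHom K)).toRingHom
    have hsm : ∀ (x : MonoidAlgebra K Kˣ) (w : K),
        x • w = MonoidAlgebra.lift K K Kˣ (Units.coeHom K) x * w := fun _ _ => rfl
    have hcomm : ∀ (g h : Kˣ) (w : K),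
        MonoidAlgebra.of K Kˣ g • (MonoidAlgebra.of K Kˣ h • w)
          = MonoidAlgebra.of K Kˣ h • (MonoidAlgebra.of K Kˣ g • w) := by
      intro g h w
      rw [hsm, hsm, hsm, hsm, MonoidAlgebra.lift_of, MonoidAlgebra.lift_of]
      ring
    have hpow : ∀ (g : Kˣ) (w : K), MonoidAlgebra.of K Kˣ (g ^ m) • w = w := by
      intro g w
      rw [hsm, MonoidAlgebra.lift_of]
      have hg : g ^ m = 1 := by rw [← hm]; exact pow_card_eq_one'
      rw [hg]
      simp
    have h1 := hR Kˣ K hcomm hpow β v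
    have hcompose : MonoidAlgebra.lift K K (FreeGroup ℕ) ((Units.coeHom K).comp β)
        = (MonoidAlgebra.lift K K Kˣ (Units.coeHom K)).comp
            (MonoidAlgebra.mapDomainAlgHom K K β) := by
      refine MonoidAlgebra.algHom_ext (fun w => ?_) (Subsingleton.elim _ _)
      rw [AlgHom.comp_apply]
      show _ = MonoidAlgebra.lift K K Kˣ (Units.coeHom K)
        (MonoidAlgebra.mapDomain β (MonoidAlgebra.single w 1))
      rw [MonoidAlgebra.mapDomain_single]
      show MonoidAlgebra.lift K K (FreeGroup ℕ) ((Units.coeHom K).comp β)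
          (MonoidAlgebra.of K (FreeGroup ℕ) w)
        = MonoidAlgebra.lift K K Kˣ (Units.coeHom K) (MonoidAlgebra.of K Kˣ (β w))
      rw [MonoidAlgebra.lift_of, MonoidAlgebra.lift_of]
      rfl
    rw [hcompose, AlgHom.comp_apply, ← hsm]
    exact h1
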